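/- Let A₁, A₂, B₁, B₂ be Hermitian operators with square equal to the identity on finite-dimensional Hilbert spaces H_A, H_B, and ρ a state on H_A ⊗ H_B. Then the CHSH value satisfies tr(ρ𝓑) ≤ 2√(2 − |tr(ρ·(1 ⊗ (i/2)[B₁,B₂]))|²). -/

import Mathlib

open Matrix Kronecker ComplexOrder

set_option linter.unusedSectionVars false
set_option maxHeartbeats 1000000

section Aux

variable {k l : Type*} [Fintype k] [DecidableEq k] [Fintype l] [DecidableEq l]

lemma trace_nonneg_of_psd (M : Matrix k k ℂ) (h : M.PosSemidef) : 0 ≤ M.trace := by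
  rw [Matrix.trace]
  apply Finset.sum_nonneg
  intro i _
  have := h.dotProduct_mulVec_nonneg (Pi.single i 1)
  simpa [Matrix.mulVec, dotProduct, Pi.single_apply] using this

lemma trace_mul_psd_nonneg {ρ X : Matrix k k ℂ} (hρ : ρ.PosSemidef) (hX : X.PosSemidef) :
    0 ≤ (ρ * X).trace := by
  obtain ⟨P, hP⟩ : ∃ P : Matrix _ _ ℂ, ρ = Pᴴ * P := by
    open scoped MatrixOrder Matrix.Norms.L2Operator in exact CStarAlgebra.nonneg_iff_eq_star_mul_self.mp hρ.nonneg
  rw [hP, Matrix.mul_assoc, Matrix.trace_mul_comm]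
  exact trace_nonneg_of_psd _ (hX.mul_mul_conjTranspose_same P)

lemma trace_mul_herm_real {ρ H : Matrix k k ℂ} (hρ : ρ.IsHermitian) (hH : H.IsHermitian) :
    ((ρ * H).trace).im = 0 := by
  have : star ((ρ * H).trace) = (ρ * H).trace := by
    rw [← Matrix.trace_conjTranspose, Matrix.conjTranspose_mul, hρ.eq, hH.eq, Matrix.trace_mul_comm]
  have := congrArg Complex.im this
  simp [Complex.star_def] at this
  linarith

lemma psd_smul {X : Matrix k k ℂ} (hX : X.PosSemidef) {r : ℝ} (hr : 0 ≤ r) :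
    ((r : ℂ) • X).PosSemidef := by
  constructor
  · unfold Matrix.IsHermitian
    rw [Matrix.conjTranspose_smul, hX.1.eq]
    simp
  · intro x
    have h := hX.2 x
    have : (0:ℂ) ≤ (r:ℂ) := by exact_mod_cast Complex.zero_le_real.mpr hr
    convert mul_nonneg this h using 1
    simp only [Finsupp.sum, Finset.mul_sum, Matrix.smul_apply, smul_eq_mul]
    exact Finset.sum_congr rfl fun _ _ => Finset.sum_congr rfl fun _ _ => by ring

lemma herm_sq_psd {H : Matrix k k ℂ} (hH : H.IsHermitian) : (H * H).PosSemidef := by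
  have := Matrix.posSemidef_conjTranspose_mul_self H
  rwa [hH.eq] at this

lemma one_add_psd {H : Matrix k k ℂ} (hH : H.IsHermitian)
    (h : ((1 : Matrix k k ℂ) - H * H).PosSemidef) :
    ((1 : Matrix k k ℂ) + H).PosSemidef := by
  have key : (1 : Matrix k k ℂ) + H =
      ((1/2 : ℝ) : ℂ) • (((1 + H) * (1 + H)) + (1 - H * H)) := by
    have expand : ((1 + H) * (1 + H)) + ((1:Matrix k k ℂ) - H * H)
        = 2 • (1:Matrix k k ℂ) + 2 • H := by noncomm_ring
    rw [expand]
    push_cast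
    module
  rw [key]
  exact psd_smul (((herm_sq_psd (by simp [Matrix.IsHermitian, hH.eq])).add h)) (by norm_num)

lemma one_sub_psd {H : Matrix k k ℂ} (hH : H.IsHermitian)
    (h : ((1 : Matrix k k ℂ) - H * H).PosSemidef) :
    ((1 : Matrix k k ℂ) - H).PosSemidef := by
  have h' : ((1 : Matrix k k ℂ) - (-H) * (-H)).PosSemidef := by simpa using h
  simpa [sub_eq_add_neg] using one_add_psd hH.neg h'

lemma kron_conjTranspose (A : Matrix k k ℂ) (B : Matrix l l ℂ) :
    (A ⊗ₖ B)ᴴ = Aᴴ ⊗ₖ Bᴴ := by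
  ext ⟨i, j⟩ ⟨p, q⟩
  simp [Matrix.conjTranspose_apply, Matrix.kroneckerMap_apply]

lemma kron_psd {A : Matrix k k ℂ} {B : Matrix l l ℂ} (hA : A.PosSemidef) (hB : B.PosSemidef) :
    (A ⊗ₖ B).PosSemidef := by
  obtain ⟨P, hP⟩ : ∃ P : Matrix _ _ ℂ, A = Pᴴ * P := by
    open scoped MatrixOrder Matrix.Norms.L2Operator in exact CStarAlgebra.nonneg_iff_eq_star_mul_self.mp hA.nonneg
  obtain ⟨Q, hQ⟩ : ∃ Q : Matrix _ _ ℂ, B = Qᴴ * Q := by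
    open scoped MatrixOrder Matrix.Norms.L2Operator in exact CStarAlgebra.nonneg_iff_eq_star_mul_self.mp hB.nonneg
  have : A ⊗ₖ B = (P ⊗ₖ Q)ᴴ * (P ⊗ₖ Q) := by
    rw [kron_conjTranspose, ← Matrix.mul_kronecker_mul, ← hP, ← hQ]
  rw [this]
  exact Matrix.posSemidef_conjTranspose_mul_self _

lemma kronecker_sub' (A : Matrix k k ℂ) (B C : Matrix l l ℂ) :
    A ⊗ₖ (B - C) = A ⊗ₖ B - A ⊗ₖ C := by
  ext ⟨i,j⟩ ⟨p,q⟩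
  simp [Matrix.kroneckerMap_apply, mul_sub]

lemma sub_kronecker' (A B : Matrix k k ℂ) (C : Matrix l l ℂ) :
    (A - B) ⊗ₖ C = A ⊗ₖ C - B ⊗ₖ C := by
  ext ⟨i,j⟩ ⟨p,q⟩
  simp [Matrix.kroneckerMap_apply, sub_mul]

lemma kronecker_neg' (A : Matrix k k ℂ) (B : Matrix l l ℂ) :
    A ⊗ₖ (-B) = -(A ⊗ₖ B) := by
  ext ⟨i,j⟩ ⟨p,q⟩
  simp [Matrix.kroneckerMap_apply]

lemma ofNat_eq_smul_one : (4 : Matrix k k ℂ) = (4:ℂ) • (1 : Matrix k k ℂ) := by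
  have h : (4 : Matrix k k ℂ) = Matrix.diagonal (fun _ : k => (4:ℂ)) := rfl
  rw [h]
  ext i j
  by_cases hij : i = j <;> simp [hij, Matrix.diagonal_apply, Matrix.one_apply]

lemma SS_eq {P Q : Matrix k k ℂ} (hP : P*P = 1) (hQ : Q*Q = 1) :
    (P*Q + Q*P)*(P*Q + Q*P) = (P*Q - Q*P)*(P*Q - Q*P) + (4:Matrix k k ℂ) := by
  have h4 : (P*Q + Q*P)*(P*Q + Q*P) - (P*Q - Q*P)*(P*Q - Q*P)
      = 2•(P*(Q*Q)*P) + 2•(Q*(P*P)*Q) := by noncomm_ring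
  rw [hQ, hP] at h4
  simp only [Matrix.mul_one] at h4
  rw [hP, hQ] at h4
  have h5 : (2•(1:Matrix k k ℂ) + 2•(1:Matrix k k ℂ)) = 4 := by norm_num
  rw [h5] at h4
  have := sub_eq_iff_eq_add.mp h4
  rw [this]
  abel

lemma anticomm_pair {P Q : Matrix k k ℂ} (hP : P*P = 1) :
    P*(P*Q - Q*P) + (P*Q - Q*P)*P = 0 := by
  have h : P*(P*Q - Q*P) + (P*Q - Q*P)*P = P*P*Q - Q*(P*P) := by noncomm_ring
  rw [h, hP]
  simp

end Aux

/-- Local analogue of Tsirelson's bound: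
⟨𝓑⟩ ≤ 2√(2 − |⟨(i/2)[B₁,B₂]⟩|²). -/
theorem chsh_local_commutator_bound {m n : ℕ}
    (A₁ A₂ : Matrix (Fin m) (Fin m) ℂ) (B₁ B₂ : Matrix (Fin n) (Fin n) ℂ)
    (hA₁ : A₁.IsHermitian) (hA₂ : A₂.IsHermitian)
    (hB₁ : B₁.IsHermitian) (hB₂ : B₂.IsHermitian)
    (hA₁u : A₁ * A₁ = 1) (hA₂u : A₂ * A₂ = 1)
    (hB₁u : B₁ * B₁ = 1) (hB₂u : B₂ * B₂ = 1)
    (ρ : Matrix (Fin m × Fin n) (Fin m × Fin n) ℂ)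
    (hρ : ρ.PosSemidef) (hρtr : ρ.trace = 1) :
    ((ρ * (A₁ ⊗ₖ (B₁ + B₂) + A₂ ⊗ₖ (B₁ - B₂))).trace).re ≤
      2 * Real.sqrt (2 -
        ‖((ρ * ((1 : Matrix (Fin m) (Fin m) ℂ) ⊗ₖ
          ((Complex.I / 2) • (B₁ * B₂ - B₂ * B₁)))).trace)‖ ^ 2) := by
  -- abbreviations
  set KA : Matrix (Fin m) (Fin m) ℂ := A₁*A₂ - A₂*A₁ with hKAdef
  set KB : Matrix (Fin n) (Fin n) ℂ := B₁*B₂ - B₂*B₁ with hKBdef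
  set SA : Matrix (Fin m) (Fin m) ℂ := A₁*A₂ + A₂*A₁ with hSAdef
  set SB : Matrix (Fin n) (Fin n) ℂ := B₁*B₂ + B₂*B₁ with hSBdef
  set CA : Matrix (Fin m) (Fin m) ℂ := (Complex.I/2) • KA with hCAdef
  set CB : Matrix (Fin n) (Fin n) ℂ := (Complex.I/2) • KB with hCBdef
  set Bop : Matrix (Fin m × Fin n) (Fin m × Fin n) ℂ :=
    A₁ ⊗ₖ (B₁ + B₂) + A₂ ⊗ₖ (B₁ - B₂) with hBopdef
  set Chat : Matrix (Fin m × Fin n) (Fin m × Fin n) ℂ :=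
    (1 : Matrix (Fin m) (Fin m) ℂ) ⊗ₖ CB with hChatdef
  set Khat : Matrix (Fin m × Fin n) (Fin m × Fin n) ℂ :=
    (1 : Matrix (Fin m) (Fin m) ℂ) ⊗ₖ KB with hKhatdef
  -- Hermiticity of building blocks
  have hKBH : KBᴴ = -KB := by
    rw [hKBdef, Matrix.conjTranspose_sub, Matrix.conjTranspose_mul,
      Matrix.conjTranspose_mul, hB₁.eq, hB₂.eq]
    abel
  have hKAH : KAᴴ = -KA := by
    rw [hKAdef, Matrix.conjTranspose_sub, Matrix.conjTranspose_mul,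
      Matrix.conjTranspose_mul, hA₁.eq, hA₂.eq]
    abel
  have hCBH : CB.IsHermitian := by
    unfold Matrix.IsHermitian
    rw [hCBdef, Matrix.conjTranspose_smul, hKBH]
    simp [Complex.star_def]
    module
  have hCAH : CA.IsHermitian := by
    unfold Matrix.IsHermitian
    rw [hCAdef, Matrix.conjTranspose_smul, hKAH]
    simp [Complex.star_def]
    module
  have hSBH : SB.IsHermitian := by
    unfold Matrix.IsHermitian
    rw [hSBdef, Matrix.conjTranspose_add, Matrix.conjTranspose_mul,
      Matrix.conjTranspose_mul, hB₁.eq, hB₂.eq]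
    abel
  have hSAH : SA.IsHermitian := by
    unfold Matrix.IsHermitian
    rw [hSAdef, Matrix.conjTranspose_add, Matrix.conjTranspose_mul,
      Matrix.conjTranspose_mul, hA₁.eq, hA₂.eq]
    abel
  -- 1 - C² = T² on each side
  have key_one_sub_sq : ∀ (k : ℕ) (P Q : Matrix (Fin k) (Fin k) ℂ), P*P = 1 → Q*Q = 1 →
      (1 : Matrix (Fin k) (Fin k) ℂ) - ((Complex.I/2) • (P*Q - Q*P)) * ((Complex.I/2) • (P*Q - Q*P))
        = (((1:ℂ)/2) • (P*Q + Q*P)) * (((1:ℂ)/2) • (P*Q + Q*P)) := by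
    intro k P Q hP hQ
    have hSS := SS_eq hP hQ
    rw [smul_mul_smul_comm, smul_mul_smul_comm, hSS, ofNat_eq_smul_one]
    have hI : Complex.I/2 * (Complex.I/2) = -(1/4 : ℂ) := by
      rw [div_mul_div_comm, Complex.I_mul_I]
      norm_num
    rw [hI]
    have h2 : (1:ℂ)/2 * ((1:ℂ)/2) = (1/4 : ℂ) := by norm_num
    rw [h2, smul_add, smul_smul]
    push_cast
    module
  have hCBsq : ((1 : Matrix (Fin n) (Fin n) ℂ) - CB * CB).PosSemidef := by
    rw [hCBdef, hKBdef, key_one_sub_sq n B₁ B₂ hB₁u hB₂u]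
    exact herm_sq_psd (by
      unfold Matrix.IsHermitian
      rw [Matrix.conjTranspose_smul]
      rw [show (B₁*B₂ + B₂*B₁)ᴴ = B₁*B₂ + B₂*B₁ from hSBH.eq]
      simp [Complex.star_def])
  have hCAsq : ((1 : Matrix (Fin m) (Fin m) ℂ) - CA * CA).PosSemidef := by
    rw [hCAdef, hKAdef, key_one_sub_sq m A₁ A₂ hA₁u hA₂u]
    exact herm_sq_psd (by
      unfold Matrix.IsHermitian
      rw [Matrix.conjTranspose_smul]
      rw [show (A₁*A₂ + A₂*A₁)ᴴ = A₁*A₂ + A₂*A₁ from hSAH.eq]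
      simp [Complex.star_def])
  -- PSD of 1 - CA ⊗ CB
  have hkronPSD : ((1 : Matrix (Fin m × Fin n) (Fin m × Fin n) ℂ) - CA ⊗ₖ CB).PosSemidef := by
    have key : (1 : Matrix (Fin m × Fin n) (Fin m × Fin n) ℂ) - CA ⊗ₖ CB =
        ((1/2 : ℝ) : ℂ) • (((1 - CA) ⊗ₖ (1 + CB)) + ((1 + CA) ⊗ₖ (1 - CB))) := by
      rw [sub_kronecker', add_kronecker, Matrix.kronecker_add, Matrix.kronecker_add,
        kronecker_sub', kronecker_sub', Matrix.one_kronecker_one]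
      push_cast
      module
    rw [key]
    refine psd_smul (Matrix.PosSemidef.add (kron_psd ?_ ?_) (kron_psd ?_ ?_)) (by norm_num)
    · exact one_sub_psd hCAH hCAsq
    · exact one_add_psd hCBH hCBsq
    · exact one_add_psd hCAH hCAsq
    · exact one_sub_psd hCBH hCBsq
  -- Bop² identity
  have hBsq : Bop * Bop = ((4:ℂ) • (1 : Matrix (Fin m × Fin n) (Fin m × Fin n) ℂ)) - KA ⊗ₖ KB := by
    have e1 : (B₁+B₂)*(B₁+B₂) + (B₁-B₂)*(B₁-B₂) = (4 : Matrix (Fin n) (Fin n) ℂ) := by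
      have h : (B₁+B₂)*(B₁+B₂) + (B₁-B₂)*(B₁-B₂) = 2•(B₁*B₁) + 2•(B₂*B₂) := by noncomm_ring
      rw [h, hB₁u, hB₂u]
      norm_num
    have e2 : (B₁+B₂)*(B₁-B₂) = -KB := by
      have h : (B₁+B₂)*(B₁-B₂) = B₁*B₁ - B₂*B₂ - (B₁*B₂ - B₂*B₁) := by noncomm_ring
      rw [h, hB₁u, hB₂u, hKBdef]
      abel
    have e3 : (B₁-B₂)*(B₁+B₂) = KB := by
      have h : (B₁-B₂)*(B₁+B₂) = B₁*B₁ - B₂*B₂ + (B₁*B₂ - B₂*B₁) := by noncomm_ring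
      rw [h, hB₁u, hB₂u, hKBdef]
      abel
    have t11 := (Matrix.mul_kronecker_mul A₁ A₁ (B₁+B₂) (B₁+B₂)).symm
    have t12 := (Matrix.mul_kronecker_mul A₁ A₂ (B₁+B₂) (B₁-B₂)).symm
    have t21 := (Matrix.mul_kronecker_mul A₂ A₁ (B₁-B₂) (B₁+B₂)).symm
    have t22 := (Matrix.mul_kronecker_mul A₂ A₂ (B₁-B₂) (B₁-B₂)).symm
    have expand : Bop * Bop =
        (A₁*A₁) ⊗ₖ ((B₁+B₂)*(B₁+B₂)) + (A₂*A₂) ⊗ₖ ((B₁-B₂)*(B₁-B₂))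
        + ((A₁*A₂) ⊗ₖ ((B₁+B₂)*(B₁-B₂)) + (A₂*A₁) ⊗ₖ ((B₁-B₂)*(B₁+B₂))) := by
      rw [hBopdef, Matrix.add_mul, Matrix.mul_add, Matrix.mul_add, t11, t12, t21, t22]
      abel
    rw [expand, hA₁u, hA₂u, e2, e3, ← Matrix.kronecker_add, e1, kronecker_neg',
      hKAdef, sub_kronecker']
    rw [show ((1 : Matrix (Fin m) (Fin m) ℂ) ⊗ₖ (4 : Matrix (Fin n) (Fin n) ℂ))
        = (4:ℂ) • (1 : Matrix (Fin m × Fin n) (Fin m × Fin n) ℂ) from by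
      rw [ofNat_eq_smul_one, Matrix.kronecker_smul, Matrix.one_kronecker_one]]
    module
  -- anticommutation
  have hanti : Bop * Khat + Khat * Bop = 0 := by
    have a1 : B₁*KB + KB*B₁ = 0 := by
      have := anticomm_pair (Q := B₂) hB₁u
      rw [hKBdef]
      calc B₁*(B₁*B₂ - B₂*B₁) + (B₁*B₂ - B₂*B₁)*B₁
          = B₁*(B₁*B₂ - B₂*B₁) + (B₁*B₂ - B₂*B₁)*B₁ := rfl
        _ = 0 := this
    have a2 : B₂*KB + KB*B₂ = 0 := by
      have h := anticomm_pair (Q := B₁) hB₂u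
      have h' : B₂*KB + KB*B₂ = -(B₂*(B₂*B₁ - B₁*B₂) + (B₂*B₁ - B₁*B₂)*B₂) := by
        rw [hKBdef]; noncomm_ring
      rw [h', h]
      simp
    have z1 : (B₁+B₂)*KB + KB*(B₁+B₂) = 0 := by
      have h : (B₁+B₂)*KB + KB*(B₁+B₂) = (B₁*KB + KB*B₁) + (B₂*KB + KB*B₂) := by noncomm_ring
      rw [h, a1, a2]; simp
    have z2 : (B₁-B₂)*KB + KB*(B₁-B₂) = 0 := by
      have h : (B₁-B₂)*KB + KB*(B₁-B₂) = (B₁*KB + KB*B₁) - (B₂*KB + KB*B₂) := by noncomm_ring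
      rw [h, a1, a2]; simp
    have u1 : (A₁ ⊗ₖ (B₁+B₂)) * Khat = A₁ ⊗ₖ ((B₁+B₂)*KB) := by
      rw [hKhatdef, ← Matrix.mul_kronecker_mul, Matrix.mul_one]
    have u2 : (A₂ ⊗ₖ (B₁-B₂)) * Khat = A₂ ⊗ₖ ((B₁-B₂)*KB) := by
      rw [hKhatdef, ← Matrix.mul_kronecker_mul, Matrix.mul_one]
    have v1 : Khat * (A₁ ⊗ₖ (B₁+B₂)) = A₁ ⊗ₖ (KB*(B₁+B₂)) := by
      rw [hKhatdef, ← Matrix.mul_kronecker_mul, Matrix.one_mul]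
    have v2 : Khat * (A₂ ⊗ₖ (B₁-B₂)) = A₂ ⊗ₖ (KB*(B₁-B₂)) := by
      rw [hKhatdef, ← Matrix.mul_kronecker_mul, Matrix.one_mul]
    have expand : Bop * Khat + Khat * Bop =
        A₁ ⊗ₖ ((B₁+B₂)*KB + KB*(B₁+B₂)) + A₂ ⊗ₖ ((B₁-B₂)*KB + KB*(B₁-B₂)) := by
      rw [hBopdef, Matrix.add_mul, Matrix.mul_add, u1, u2, v1, v2,
        Matrix.kronecker_add, Matrix.kronecker_add]
      abel
    rw [expand, z1, z2, Matrix.kronecker_zero, Matrix.kronecker_zero, add_zero]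
  have hantiC : Bop * Chat + Chat * Bop = 0 := by
    have h1 : Chat = (Complex.I/2) • Khat := by
      rw [hChatdef, hKhatdef, hCBdef, Matrix.kronecker_smul]
    rw [h1, mul_smul_comm, smul_mul_assoc, ← smul_add, hanti, smul_zero]
  -- Hermiticity of Bop, Chat
  have hBopH : Bop.IsHermitian := by
    unfold Matrix.IsHermitian
    rw [hBopdef, Matrix.conjTranspose_add, kron_conjTranspose, kron_conjTranspose,
      Matrix.conjTranspose_add, Matrix.conjTranspose_sub, hA₁.eq, hA₂.eq, hB₁.eq, hB₂.eq]
  have hChatH : Chat.IsHermitian := by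
    unfold Matrix.IsHermitian
    rw [hChatdef, kron_conjTranspose, Matrix.conjTranspose_one, hCBH.eq]
  -- PSD of 8 - Bop² and 1 - Chat²
  have hGpsd : ((((8:ℝ)):ℂ) • (1 : Matrix (Fin m × Fin n) (Fin m × Fin n) ℂ)
      - Bop * Bop).PosSemidef := by
    have key : (((8:ℝ)):ℂ) • (1 : Matrix (Fin m × Fin n) (Fin m × Fin n) ℂ) - Bop * Bop
        = (((4:ℝ)):ℂ) • ((1 : Matrix (Fin m × Fin n) (Fin m × Fin n) ℂ) - CA ⊗ₖ CB) := by
      rw [hBsq, hCAdef, hCBdef, Matrix.smul_kronecker, Matrix.kronecker_smul, smul_smul]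
      have hI : Complex.I/2 * (Complex.I/2) = -(1/4 : ℂ) := by
        rw [div_mul_div_comm, Complex.I_mul_I]
        norm_num
      rw [hI]
      push_cast
      module
    rw [key]
    exact psd_smul hkronPSD (by norm_num)
  have hHpsd : ((1 : Matrix (Fin m × Fin n) (Fin m × Fin n) ℂ) - Chat * Chat).PosSemidef := by
    have key : (1 : Matrix (Fin m × Fin n) (Fin m × Fin n) ℂ) - Chat * Chat
        = (1 : Matrix (Fin m) (Fin m) ℂ) ⊗ₖ ((1 : Matrix (Fin n) (Fin n) ℂ) - CB * CB) := by
      rw [hChatdef, ← Matrix.mul_kronecker_mul, Matrix.one_mul, kronecker_sub',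
        Matrix.one_kronecker_one]
    rw [key]
    exact kron_psd Matrix.PosSemidef.one hCBsq
  -- trace values
  set b : ℂ := (ρ * Bop).trace with hbdef
  set c : ℂ := (ρ * Chat).trace with hcdef
  have hbim : b.im = 0 := trace_mul_herm_real hρ.1 hBopH
  have hcim : c.im = 0 := trace_mul_herm_real hρ.1 hChatH
  -- the key inequality for all real lam, mu
  have key : ∀ lam mu : ℝ, (lam * b.re + mu * c.re)^2 ≤ 8 * lam^2 + mu^2 := by
    intro lam mu
    set M : Matrix (Fin m × Fin n) (Fin m × Fin n) ℂ :=
      (lam:ℂ) • Bop + (mu:ℂ) • Chat with hMdef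
    have hMH : M.IsHermitian := by
      unfold Matrix.IsHermitian
      rw [hMdef, Matrix.conjTranspose_add, Matrix.conjTranspose_smul,
        Matrix.conjTranspose_smul, hBopH.eq, hChatH.eq]
      simp [Complex.star_def, Complex.conj_ofReal]
    have hMsq : M * M = ((lam^2:ℝ):ℂ) • (Bop * Bop) + ((mu^2:ℝ):ℂ) • (Chat * Chat) := by
      have e : M * M = ((lam*lam:ℝ):ℂ) • (Bop * Bop) + ((mu*mu:ℝ):ℂ) • (Chat * Chat)
          + ((lam*mu:ℝ):ℂ) • (Bop * Chat + Chat * Bop) := by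
        rw [hMdef]
        simp only [Matrix.add_mul, Matrix.mul_add, smul_mul_smul_comm, smul_add]
        push_cast
        module
      rw [hantiC, smul_zero, add_zero] at e
      rw [e]
      push_cast
      ring_nf
    -- upper bound on tr(ρ M²)
    have hUp : ((ρ * (M * M)).trace).re ≤ 8 * lam^2 + mu^2 := by
      have hX : (((8*lam^2 + mu^2 : ℝ)):ℂ) • (1 : Matrix (Fin m × Fin n) (Fin m × Fin n) ℂ)
          - M * M
          = ((lam^2:ℝ):ℂ) • ((((8:ℝ)):ℂ) • (1 : Matrix (Fin m × Fin n) (Fin m × Fin n) ℂ)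
              - Bop * Bop)
            + ((mu^2:ℝ):ℂ) • ((1 : Matrix (Fin m × Fin n) (Fin m × Fin n) ℂ) - Chat * Chat) := by
        rw [hMsq]
        push_cast
        module
      have hXpsd := (psd_smul hGpsd (sq_nonneg lam)).add (psd_smul hHpsd (sq_nonneg mu))
      rw [← hX] at hXpsd
      have h0 := trace_mul_psd_nonneg hρ hXpsd
      have hexp : (ρ * ((((8*lam^2 + mu^2 : ℝ)):ℂ) • (1 : Matrix (Fin m × Fin n) (Fin m × Fin n) ℂ)
          - M * M)).trace
          = (((8*lam^2 + mu^2 : ℝ)):ℂ) - (ρ * (M * M)).trace := by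
        rw [Matrix.mul_sub, Matrix.mul_smul, Matrix.mul_one, Matrix.trace_sub,
          Matrix.trace_smul, hρtr]
        simp
      rw [hexp] at h0
      have := (Complex.le_def.mp h0).1
      simp only [Complex.zero_re, Complex.sub_re, Complex.ofReal_re] at this
      linarith
    -- lower bound (Cauchy-Schwarz)
    have htval : ((ρ * M).trace) = (lam:ℂ) * b + (mu:ℂ) * c := by
      rw [hMdef, Matrix.mul_add, Matrix.mul_smul, Matrix.mul_smul, Matrix.trace_add,
        Matrix.trace_smul, Matrix.trace_smul, hbdef, hcdef]
      simp [smul_eq_mul]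
    have htre : ((ρ * M).trace).re = lam * b.re + mu * c.re := by
      rw [htval]
      simp [Complex.add_re, Complex.mul_re, Complex.ofReal_re, Complex.ofReal_im]
    set r : ℝ := lam * b.re + mu * c.re with hrdef
    have hLow : r^2 ≤ ((ρ * (M * M)).trace).re := by
      set N : Matrix (Fin m × Fin n) (Fin m × Fin n) ℂ := M - (r:ℂ) • 1 with hNdef
      have hNH : N.IsHermitian := by
        unfold Matrix.IsHermitian
        rw [hNdef, Matrix.conjTranspose_sub, Matrix.conjTranspose_smul,
          Matrix.conjTranspose_one, hMH.eq]
        simp [Complex.star_def, Complex.conj_ofReal]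
      have h0 := trace_mul_psd_nonneg hρ (herm_sq_psd hNH)
      have hNN : N * N = M * M - ((2*r:ℝ):ℂ) • M + (((r*r:ℝ)):ℂ) • 1 := by
        rw [hNdef]
        simp only [Matrix.sub_mul, Matrix.mul_sub, Matrix.smul_mul, Matrix.mul_smul,
          Matrix.one_mul, Matrix.mul_one, smul_smul]
        push_cast
        module
      have hexp : (ρ * (N * N)).trace
          = (ρ * (M * M)).trace - ((2*r:ℝ):ℂ) * ((ρ * M).trace) + (((r*r:ℝ)):ℂ) := by
        rw [hNN, Matrix.mul_add, Matrix.mul_sub, Matrix.mul_smul, Matrix.mul_smul,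
          Matrix.mul_one, Matrix.trace_add, Matrix.trace_sub, Matrix.trace_smul,
          Matrix.trace_smul, hρtr]
        simp [smul_eq_mul]
      rw [hexp] at h0
      have hre := (Complex.le_def.mp h0).1
      have htim : ((ρ * M).trace).im = 0 := trace_mul_herm_real hρ.1 hMH
      simp only [Complex.zero_re, Complex.add_re, Complex.sub_re, Complex.mul_re,
        Complex.ofReal_re, Complex.ofReal_im, htim] at hre
      rw [htre] at hre
      nlinarith [hre]
    calc r^2 ≤ ((ρ * (M * M)).trace).re := hLow
      _ ≤ 8 * lam^2 + mu^2 := hUp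
  -- final numeric argument
  set x : ℝ := b.re with hxdef
  set y : ℝ := c.re with hydef
  have habs : ‖c‖ ^ 2 = y^2 := by
    rw [Complex.sq_norm, Complex.normSq_apply, hcim]
    ring
  have hkey := key (x/8) y
  have hu : x^2/8 + y^2 ≤ 1 := by nlinarith [sq_nonneg x, sq_nonneg y, sq_nonneg (x^2/8 + y^2)]
  have hx2 : x^2 ≤ 4 * (2 - y^2) := by nlinarith
  have hy2 : y^2 ≤ 1 := by nlinarith [sq_nonneg x]
  have hgoal : x ≤ 2 * Real.sqrt (2 - y^2) := by
    have h3 : x ≤ |x| := le_abs_self x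
    have h4 : |x| = Real.sqrt (x^2) := (Real.sqrt_sq_eq_abs x).symm
    have h5 : Real.sqrt (x^2) ≤ Real.sqrt (4 * (2 - y^2)) := Real.sqrt_le_sqrt hx2
    have h6 : Real.sqrt (4 * (2 - y^2)) = 2 * Real.sqrt (2 - y^2) := by
      rw [show (4:ℝ) * (2 - y^2) = 2^2 * (2 - y^2) by ring,
        Real.sqrt_mul (by positivity), Real.sqrt_sq (by norm_num)]
    linarith [h3, h4 ▸ h3, h5, h6 ▸ h5]
  rw [habs]
  exact hgoal
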